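/- Let k be an algebraically closed field of characteristic p > 2, G = SL₂, and let m, n be nonnegative integers with m = n + 2 and p | m. Then Hom_G(L(m) ⊗ L(n), 𝔰𝔩₂) = 0. -/
import Mathlib

open Matrix

/-- The diagonal torus element diag(t, t⁻¹) of SL₂. -/
def sl2diag {k : Type} [Field k] (t : kˣ) : Matrix.SpecialLinearGroup (Fin 2) k :=
  ⟨!![(t : k), 0; 0, ((t⁻¹ : kˣ) : k)], by
    simp [Matrix.det_fin_two_of, ← Units.val_mul]⟩

/-- The upper unipotent element of SL₂. -/
def sl2unip {k : Type} [Field k] (s : k) : Matrix.SpecialLinearGroup (Fin 2) k :=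
  ⟨!![1, s; 0, 1], by simp [Matrix.det_fin_two_of]⟩

/-- A representation of SL₂ is irreducible of highest weight n. -/
def IsSimpleHW {k V : Type} [Field k] [AddCommGroup V] [Module k V]
    (ρ : Representation k (Matrix.SpecialLinearGroup (Fin 2) k) V) (n : ℕ) : Prop :=
  Nontrivial V ∧
  (∀ p : Submodule k V, (∀ g, ∀ x ∈ p, ρ g x ∈ p) → p = ⊥ ∨ p = ⊤) ∧
  ∃ v : V, v ≠ 0 ∧ (∀ s : k, ρ (sl2unip s) v = v) ∧
    ∀ t : kˣ, ρ (sl2diag t) v = ((t : k) ^ n) • v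

section Aux

variable {k : Type} [Field k]

/-- The lower unipotent element of SL₂. -/
def sl2low (s : k) : Matrix.SpecialLinearGroup (Fin 2) k :=
  ⟨!![1, 0; s, 1], by simp [Matrix.det_fin_two_of]⟩

/-- The Weyl element of SL₂. -/
def sl2w : Matrix.SpecialLinearGroup (Fin 2) k :=
  ⟨!![0, 1; -1, 0], by simp [Matrix.det_fin_two_of]⟩

lemma sl2unip_coe (s : k) : (sl2unip s : Matrix (Fin 2) (Fin 2) k) = !![1, s; 0, 1] := rfl

lemma sl2low_coe (s : k) : (sl2low s : Matrix (Fin 2) (Fin 2) k) = !![1, 0; s, 1] := rfl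

lemma sl2w_coe : ((sl2w : Matrix.SpecialLinearGroup (Fin 2) k) : Matrix (Fin 2) (Fin 2) k) = !![0, 1; -1, 0] := rfl

lemma sl2diag_coe (t : kˣ) :
    (sl2diag t : Matrix (Fin 2) (Fin 2) k) = !![(t : k), 0; 0, (t : k)⁻¹] := by
  have : ((t⁻¹ : kˣ) : k) = (t : k)⁻¹ := by simp
  show (!![(t : k), 0; 0, ((t⁻¹ : kˣ) : k)] : Matrix (Fin 2) (Fin 2) k) = _
  rw [this]

lemma sl2_eq_of_coe {A B : Matrix.SpecialLinearGroup (Fin 2) k}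
    (h : (A : Matrix (Fin 2) (Fin 2) k) = B) : A = B := Subtype.ext h

lemma sl2unip_inv (s : k) : (sl2unip s)⁻¹ = sl2unip (-s) := by
  apply inv_eq_of_mul_eq_one_right
  apply sl2_eq_of_coe
  rw [Matrix.SpecialLinearGroup.coe_mul, sl2unip_coe, sl2unip_coe,
    Matrix.SpecialLinearGroup.coe_one]
  ext i j
  fin_cases i <;> fin_cases j <;> simp [Matrix.mul_apply, Fin.sum_univ_two]

lemma sl2low_inv (s : k) : (sl2low s)⁻¹ = sl2low (-s) := by
  apply inv_eq_of_mul_eq_one_right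
  apply sl2_eq_of_coe
  rw [Matrix.SpecialLinearGroup.coe_mul, sl2low_coe, sl2low_coe,
    Matrix.SpecialLinearGroup.coe_one]
  ext i j
  fin_cases i <;> fin_cases j <;> simp [Matrix.mul_apply, Fin.sum_univ_two]

lemma sl2diag_inv (t : kˣ) : (sl2diag t)⁻¹ = sl2diag t⁻¹ := by
  apply inv_eq_of_mul_eq_one_right
  apply sl2_eq_of_coe
  rw [Matrix.SpecialLinearGroup.coe_mul, sl2diag_coe, sl2diag_coe,
    Matrix.SpecialLinearGroup.coe_one]
  ext i j
  fin_cases i <;> fin_cases j <;>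
    simp [Matrix.mul_apply, Fin.sum_univ_two, Units.ne_zero]

lemma low_mul_w (s : k) : sl2low s * sl2w = sl2w * sl2unip (-s) := by
  apply sl2_eq_of_coe
  rw [Matrix.SpecialLinearGroup.coe_mul, Matrix.SpecialLinearGroup.coe_mul,
    sl2low_coe, sl2w_coe, sl2unip_coe]
  ext i j
  fin_cases i <;> fin_cases j <;> simp [Matrix.mul_apply, Fin.sum_univ_two]

lemma diag_mul_w (t : kˣ) : sl2diag t * sl2w = sl2w * sl2diag t⁻¹ := by
  apply sl2_eq_of_coe
  rw [Matrix.SpecialLinearGroup.coe_mul, Matrix.SpecialLinearGroup.coe_mul,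
    sl2diag_coe, sl2w_coe, sl2diag_coe]
  ext i j
  fin_cases i <;> fin_cases j <;> simp [Matrix.mul_apply, Fin.sum_univ_two]

lemma w_mul_w : (sl2w : Matrix.SpecialLinearGroup (Fin 2) k) * sl2w = sl2diag (-1) := by
  apply sl2_eq_of_coe
  simp only [Matrix.SpecialLinearGroup.coe_mul, sl2w_coe, sl2diag_coe]
  ext i j
  fin_cases i <;> fin_cases j <;> simp [Matrix.mul_apply, Fin.sum_univ_two] <;> norm_num

lemma sl2_det_entries (N : Matrix.SpecialLinearGroup (Fin 2) k) :
    N.val 0 0 * N.val 1 1 - N.val 0 1 * N.val 1 0 = 1 := by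
  have := N.property
  rwa [Matrix.det_fin_two] at this

/-- Decomposition of an SL₂ element with lower-right entry nonzero. -/
lemma sl2_decomp_A (N : Matrix.SpecialLinearGroup (Fin 2) k) (h : N.val 1 1 ≠ 0) :
    N = sl2unip (N.val 0 1 / N.val 1 1) * sl2diag (Units.mk0 (N.val 1 1) h)⁻¹ *
      sl2low (N.val 1 0 / N.val 1 1) := by
  have hdet := sl2_det_entries N
  apply sl2_eq_of_coe
  symm
  rw [Matrix.SpecialLinearGroup.coe_mul, Matrix.SpecialLinearGroup.coe_mul,
    sl2unip_coe, sl2low_coe, sl2diag_coe]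
  ext i j
  fin_cases i <;> fin_cases j <;> simp [Matrix.mul_apply, Fin.sum_univ_two]
  all_goals try field_simp
  all_goals first | linear_combination hdet | linear_combination -hdet | ring

/-- Decomposition of an SL₂ element with lower-right entry zero. -/
lemma sl2_decomp_B (N : Matrix.SpecialLinearGroup (Fin 2) k) (h : N.val 1 1 = 0)
    (hR : N.val 1 0 ≠ 0) :
    N = sl2unip (N.val 0 0 / N.val 1 0) *
      sl2diag (Units.mk0 (-(N.val 1 0)⁻¹) (by simp [hR])) * sl2w := by
  have hdet := sl2_det_entries N
  rw [h] at hdet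
  apply sl2_eq_of_coe
  symm
  rw [Matrix.SpecialLinearGroup.coe_mul, Matrix.SpecialLinearGroup.coe_mul,
    sl2unip_coe, sl2w_coe, sl2diag_coe]
  ext i j
  fin_cases i <;> fin_cases j <;> simp [Matrix.mul_apply, Fin.sum_univ_two, h]
  all_goals try field_simp
  all_goals first | linear_combination hdet | linear_combination -hdet | ring

/-- Decomposition of an SL₂ element with lower-left entry zero. -/
lemma sl2_decomp_C (N : Matrix.SpecialLinearGroup (Fin 2) k) (h : N.val 1 0 = 0) :
    N = sl2unip (N.val 0 0 * N.val 0 1) *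
      sl2diag (Units.mk0 (N.val 0 0) (by
        intro h0
        have hdet := sl2_det_entries N
        rw [h, h0] at hdet; simp at hdet)) := by
  have hdet := sl2_det_entries N
  rw [h] at hdet
  have hP : N.val 0 0 ≠ 0 := by intro h0; rw [h0] at hdet; simp at hdet
  apply sl2_eq_of_coe
  symm
  rw [Matrix.SpecialLinearGroup.coe_mul, sl2unip_coe, sl2diag_coe]
  ext i j
  fin_cases i <;> fin_cases j <;> simp [Matrix.mul_apply, Fin.sum_univ_two, h]
  all_goals try field_simp
  all_goals first | linear_combination hdet | linear_combination -hdet | ring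

/-- Decomposition of an SL₂ element with lower-left entry nonzero. -/
lemma sl2_decomp_D (N : Matrix.SpecialLinearGroup (Fin 2) k) (hR : N.val 1 0 ≠ 0) :
    N = sl2unip (N.val 0 0 / N.val 1 0) *
      sl2diag (Units.mk0 (-(N.val 1 0)⁻¹) (by simp [hR])) * sl2w *
      sl2unip (N.val 1 1 / N.val 1 0) := by
  have hdet := sl2_det_entries N
  apply sl2_eq_of_coe
  symm
  rw [Matrix.SpecialLinearGroup.coe_mul, Matrix.SpecialLinearGroup.coe_mul,
    Matrix.SpecialLinearGroup.coe_mul, sl2unip_coe, sl2unip_coe, sl2w_coe, sl2diag_coe]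
  ext i j
  fin_cases i <;> fin_cases j <;> simp [Matrix.mul_apply, Fin.sum_univ_two]
  all_goals try field_simp
  all_goals first | linear_combination hdet | linear_combination -hdet | ring

/-- There are elements of arbitrarily large multiplicative order in an infinite field. -/
lemma exists_pow_ne_one (k : Type) [Field k] [Infinite k] {N : ℕ} (hN : 1 ≤ N) :
    ∃ t : kˣ, (t : k) ^ N ≠ 1 := by
  have hfin : {x : k | x ^ N = 1}.Finite := by
    have hsub : {x : k | x ^ N = 1} ⊆
        {x : k | (Polynomial.X ^ N - Polynomial.C 1 : Polynomial k).IsRoot x} := by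
      intro x hx
      have hx' : x ^ N = 1 := hx
      simp [Polynomial.IsRoot, hx']
    exact (Polynomial.finite_setOf_isRoot (Polynomial.X_pow_sub_C_ne_zero (by omega) 1)).subset hsub
  obtain ⟨x, hx⟩ := ((hfin.union (Set.finite_singleton 0)).infinite_compl).nonempty
  simp only [Set.mem_compl_iff, Set.mem_union, Set.mem_setOf_eq, Set.mem_singleton_iff,
    not_or] at hx
  exact ⟨Units.mk0 x hx.2, hx.1⟩

/-- Coefficient extraction as a linear combination of evaluations. -/
lemma coeff_eval (k : Type) [Field k] [Infinite k] (M d : ℕ) :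
    ∃ (s : Fin (M + 1) → k) (e : Fin (M + 1) → k), Function.Injective s ∧
      ∀ P : Polynomial k, P.natDegree ≤ M → ∑ j, e j * P.eval (s j) = P.coeff d := by
  set s : Fin (M + 1) → k := fun j => Infinite.natEmbedding k j.val with hs
  have hsinj : Function.Injective s := by
    intro a b hab
    exact Fin.val_injective ((Infinite.natEmbedding k).injective hab)
  refine ⟨s, fun j => (Lagrange.basis Finset.univ s j).coeff d, hsinj, fun P hP => ?_⟩
  have hdeg : P.degree < (Finset.univ : Finset (Fin (M + 1))).card := by
    rw [Finset.card_univ, Fintype.card_fin]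
    calc P.degree ≤ (P.natDegree : WithBot ℕ) := Polynomial.degree_le_natDegree
      _ ≤ (M : WithBot ℕ) := by exact_mod_cast hP
      _ < ((M + 1 : ℕ) : WithBot ℕ) := by exact_mod_cast Nat.lt_succ_self M
  have hinterp := Lagrange.eq_interpolate (f := P) (hsinj.injOn) hdeg
  conv_rhs => rw [hinterp]
  rw [Lagrange.interpolate_apply, Polynomial.finset_sum_coeff]
  refine Finset.sum_congr rfl fun j _ => ?_
  rw [Polynomial.coeff_C_mul, mul_comm]

end Aux

/-- over an algebraically closed field of characteristic p > 2, if m = n + 2 and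
p ∣ m, then Hom_{SL₂}(L(m) ⊗ L(n), 𝔰𝔩₂) = 0: every SL₂-equivariant bilinear map from simple
modules of highest weights m = n + 2 and n into the traceless 2×2 matrices (adjoint action)
vanishes. -/
theorem stmt9 {k : Type} [Field k] [IsAlgClosed k] (p : ℕ) [Fact p.Prime] [CharP k p]
    (hp2 : 2 < p) (m n : ℕ) (hm : m = n + 2) (hpm : p ∣ m)
    {V W : Type} [AddCommGroup V] [Module k V] [AddCommGroup W] [Module k W]
    [FiniteDimensional k V] [FiniteDimensional k W]
    (ρ : Representation k (Matrix.SpecialLinearGroup (Fin 2) k) V)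
    (σ : Representation k (Matrix.SpecialLinearGroup (Fin 2) k) W)
    (hV : IsSimpleHW ρ m) (hW : IsSimpleHW σ n)
    (φ : V →ₗ[k] W →ₗ[k] Matrix (Fin 2) (Fin 2) k)
    (htr : ∀ (v : V) (w : W), (φ v w).trace = 0)
    (hequiv : ∀ (g : Matrix.SpecialLinearGroup (Fin 2) k) (v : V) (w : W),
      φ (ρ g v) (σ g w) =
        (g : Matrix (Fin 2) (Fin 2) k) * (φ v w) *
          ((g⁻¹ : Matrix.SpecialLinearGroup (Fin 2) k) : Matrix (Fin 2) (Fin 2) k)) :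
    φ = 0 := by
  classical
  obtain ⟨-, hVirr, v0, hv0, hv0u, hv0d⟩ := hV
  obtain ⟨-, hWirr, w0, hw0, hw0u, hw0d⟩ := hW
  subst hm
  -- arithmetic facts
  have hple : p ≤ n + 2 := Nat.le_of_dvd (by omega) hpm
  have hn1 : 1 ≤ n := by omega
  have hmk : ((n + 2 : ℕ) : k) = 0 := (CharP.cast_eq_zero_iff k p (n + 2)).2 hpm
  have hnk : ((n : ℕ) : k) ≠ 0 := by
    intro h
    have hdvd : p ∣ n := (CharP.cast_eq_zero_iff k p n).1 h
    have h2 : p ∣ 2 := by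
      have := Nat.dvd_sub hpm hdvd
      simpa using this
    have := Nat.le_of_dvd (by norm_num) h2
    omega
  have hn1k : ((n : ℕ) : k) + 1 = -1 := by
    have := hmk
    push_cast at this ⊢
    linear_combination this
  -- representation helpers
  have ρmul : ∀ (A B : Matrix.SpecialLinearGroup (Fin 2) k) (v : V),
      ρ (A * B) v = ρ A (ρ B v) := fun A B v => by rw [_root_.map_mul]; rfl
  have σmul : ∀ (A B : Matrix.SpecialLinearGroup (Fin 2) k) (w : W),
      σ (A * B) w = σ A (σ B w) := fun A B w => by rw [_root_.map_mul]; rfl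
  have σinv : ∀ (A : Matrix.SpecialLinearGroup (Fin 2) k) (w : W),
      σ A (σ A⁻¹ w) = w := fun A w => by
    rw [← σmul, mul_inv_cancel, _root_.map_one]; rfl
  have heq' : ∀ (g : Matrix.SpecialLinearGroup (Fin 2) k) (v : V) (w : W),
      φ (ρ g v) w =
        (g : Matrix (Fin 2) (Fin 2) k) * φ v (σ g⁻¹ w) *
          ((g⁻¹ : Matrix.SpecialLinearGroup (Fin 2) k) : Matrix (Fin 2) (Fin 2) k) := by
    intro g v w
    have := hequiv g v (σ g⁻¹ w)
    rwa [σinv g w] at this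
  -- the lowest weight vector of W
  set w1 : W := σ sl2w w0 with hw1def
  have hW1diag : ∀ t : kˣ, σ (sl2diag t) w1 = ((t : k)⁻¹) ^ n • w1 := by
    intro t
    rw [hw1def, ← σmul, diag_mul_w, σmul, hw0d t⁻¹, _root_.map_smul]
    congr 1
    simp
  have hW1low : ∀ z : k, σ (sl2low z) w1 = w1 := by
    intro z
    rw [hw1def, ← σmul, low_mul_w, σmul, hw0u (-z)]
  have hW1w : σ sl2w w1 = ((-1 : k) ^ n) • w0 := by
    have hne : ((-1 : kˣ) : k) = -1 := by simp
    rw [hw1def, ← σmul, w_mul_w, hw0d (-1), hne]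
  -- vanishing of φ v0 w0
  have hψ0 : φ v0 w0 = 0 := by
    have key : ∀ t : kˣ, ((t : k) ^ n * (t : k) ^ (n + 2)) • (φ v0 w0) =
        !![(t : k), 0; 0, (t : k)⁻¹] * (φ v0 w0) * !![(t : k)⁻¹, 0; 0, (t : k)] := by
      intro t
      have h := hequiv (sl2diag t) v0 w0
      rw [hv0d t, hw0d t] at h
      simp only [_root_.map_smul, LinearMap.smul_apply, smul_smul] at h
      rw [sl2diag_inv, sl2diag_coe, sl2diag_coe] at h
      simpa using h
    ext i j
    fin_cases i <;> fin_cases j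
    · obtain ⟨t, ht⟩ := exists_pow_ne_one k (N := 2 * n + 2) (by omega)
      have hab : (t : k) * (t : k)⁻¹ = 1 := mul_inv_cancel₀ (Units.ne_zero t)
      have h := congrFun (congrFun (key t) 0) 0
      simp [Matrix.mul_apply, Fin.sum_univ_two, Matrix.vecMul, dotProduct] at h
      have h2 : ((t : k) ^ (2 * n + 2) - 1) * (φ v0 w0) 0 0 = 0 := by
        linear_combination h + (φ v0 w0) 0 0 * hab
      have := (mul_eq_zero.mp h2).resolve_left (sub_ne_zero.mpr ht)
      simpa using this
    · obtain ⟨t, ht⟩ := exists_pow_ne_one k (N := 2 * n) (by omega)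
      have h := congrFun (congrFun (key t) 0) 1
      simp [Matrix.mul_apply, Fin.sum_univ_two, Matrix.vecMul, dotProduct] at h
      have h2 : (t : k) ^ 2 * (((t : k) ^ (2 * n) - 1) * (φ v0 w0) 0 1) = 0 := by
        linear_combination h
      have h3 := (mul_eq_zero.mp h2).resolve_left (pow_ne_zero 2 (Units.ne_zero t))
      have := (mul_eq_zero.mp h3).resolve_left (sub_ne_zero.mpr ht)
      simpa using this
    · obtain ⟨t, ht⟩ := exists_pow_ne_one k (N := 2 * n + 4) (by omega)
      have hab : (t : k) * (t : k)⁻¹ = 1 := mul_inv_cancel₀ (Units.ne_zero t)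
      have h := congrFun (congrFun (key t) 1) 0
      simp [Matrix.mul_apply, Fin.sum_univ_two, Matrix.vecMul, dotProduct] at h
      have h2 : ((t : k) ^ (2 * n + 4) - 1) * (φ v0 w0) 1 0 = 0 := by
        linear_combination (t : k) ^ 2 * h +
          ((t : k) * (t : k)⁻¹ + 1) * (φ v0 w0) 1 0 * hab
      have := (mul_eq_zero.mp h2).resolve_left (sub_ne_zero.mpr ht)
      simpa using this
    · obtain ⟨t, ht⟩ := exists_pow_ne_one k (N := 2 * n + 2) (by omega)
      have hab : (t : k) * (t : k)⁻¹ = 1 := mul_inv_cancel₀ (Units.ne_zero t)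
      have h := congrFun (congrFun (key t) 1) 1
      simp [Matrix.mul_apply, Fin.sum_univ_two, Matrix.vecMul, dotProduct] at h
      have h2 : ((t : k) ^ (2 * n + 2) - 1) * (φ v0 w0) 1 1 = 0 := by
        linear_combination h + (φ v0 w0) 1 1 * hab
      have := (mul_eq_zero.mp h2).resolve_left (sub_ne_zero.mpr ht)
      simpa using this
  -- structure of φ v0 w1
  set c : k := (φ v0 w1) 0 1 with hcdef
  have hB : φ v0 w1 = !![0, c; 0, 0] := by
    have key : ∀ t : kˣ, (((t : k) ^ n)⁻¹ * (t : k) ^ (n + 2)) • (φ v0 w1) =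
        !![(t : k), 0; 0, (t : k)⁻¹] * (φ v0 w1) * !![(t : k)⁻¹, 0; 0, (t : k)] := by
      intro t
      have h := hequiv (sl2diag t) v0 w1
      rw [hv0d t, hW1diag t] at h
      simp only [_root_.map_smul, LinearMap.smul_apply, smul_smul] at h
      rw [sl2diag_inv, sl2diag_coe, sl2diag_coe] at h
      simpa using h
    ext i j
    fin_cases i <;> fin_cases j
    · obtain ⟨t, ht⟩ := exists_pow_ne_one k (N := 2) (by omega)
      have hab : (t : k) * (t : k)⁻¹ = 1 := mul_inv_cancel₀ (Units.ne_zero t)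
      have habn : (t : k) ^ n * ((t : k) ^ n)⁻¹ = 1 :=
        mul_inv_cancel₀ (pow_ne_zero n (Units.ne_zero t))
      have h := congrFun (congrFun (key t) 0) 0
      simp [Matrix.mul_apply, Fin.sum_univ_two, Matrix.vecMul, dotProduct] at h
      have h2 : ((t : k) ^ 2 - 1) * (φ v0 w1) 0 0 = 0 := by
        linear_combination h - (t : k) ^ 2 * (φ v0 w1) 0 0 * habn + (φ v0 w1) 0 0 * hab
      have := (mul_eq_zero.mp h2).resolve_left (sub_ne_zero.mpr ht)
      simpa using this
    · simp [hcdef]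
    · obtain ⟨t, ht⟩ := exists_pow_ne_one k (N := 4) (by omega)
      have hab : (t : k) * (t : k)⁻¹ = 1 := mul_inv_cancel₀ (Units.ne_zero t)
      have habn : (t : k) ^ n * ((t : k) ^ n)⁻¹ = 1 :=
        mul_inv_cancel₀ (pow_ne_zero n (Units.ne_zero t))
      have h := congrFun (congrFun (key t) 1) 0
      simp [Matrix.mul_apply, Fin.sum_univ_two, Matrix.vecMul, dotProduct] at h
      have h2 : ((t : k) ^ 4 - 1) * (φ v0 w1) 1 0 = 0 := by
        linear_combination (t : k) ^ 2 * h - (t : k) ^ 4 * (φ v0 w1) 1 0 * habn +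
          ((t : k) * (t : k)⁻¹ + 1) * (φ v0 w1) 1 0 * hab
      have := (mul_eq_zero.mp h2).resolve_left (sub_ne_zero.mpr ht)
      simpa using this
    · obtain ⟨t, ht⟩ := exists_pow_ne_one k (N := 2) (by omega)
      have hab : (t : k) * (t : k)⁻¹ = 1 := mul_inv_cancel₀ (Units.ne_zero t)
      have habn : (t : k) ^ n * ((t : k) ^ n)⁻¹ = 1 :=
        mul_inv_cancel₀ (pow_ne_zero n (Units.ne_zero t))
      have h := congrFun (congrFun (key t) 1) 1
      simp [Matrix.mul_apply, Fin.sum_univ_two, Matrix.vecMul, dotProduct] at h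
      have h2 : ((t : k) ^ 2 - 1) * (φ v0 w1) 1 1 = 0 := by
        linear_combination h - (t : k) ^ 2 * (φ v0 w1) 1 1 * habn + (φ v0 w1) 1 1 * hab
      have := (mul_eq_zero.mp h2).resolve_left (sub_ne_zero.mpr ht)
      simpa using this
  -- φ v0 on translates of w1 by upper unipotents
  have hψu : ∀ β : k, φ v0 (σ (sl2unip β) w1) = !![0, c; 0, 0] := by
    intro β
    have h := hequiv (sl2unip β) v0 w1
    rw [hv0u β, hB, sl2unip_inv, sl2unip_coe, sl2unip_coe] at h
    rw [h]
    ext i j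
    fin_cases i <;> fin_cases j <;> simp [Matrix.mul_apply, Fin.sum_univ_two]
  -- the master formula : φ v0 (σ N w1) for every N
  have hψN : ∀ N : Matrix.SpecialLinearGroup (Fin 2) k,
      φ v0 (σ N w1) = !![0, (N.val 1 1) ^ n * c; 0, 0] := by
    intro N
    by_cases hS : N.val 1 1 = 0
    · have hR : N.val 1 0 ≠ 0 := by
        intro h0
        have := sl2_det_entries N
        rw [hS, h0] at this
        simp at this
      have hdec := sl2_decomp_B N hS hR
      conv_lhs => rw [hdec]
      simp only [σmul, hW1w, _root_.map_smul, hw0d, hw0u, hψ0, smul_zero, hS]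
      ext i j
      fin_cases i <;> fin_cases j <;> simp [zero_pow (by omega : n ≠ 0)]
    · have hdec := sl2_decomp_A N hS
      conv_lhs => rw [hdec]
      simp only [σmul, hW1low, hW1diag, _root_.map_smul, hψu]
      ext i j
      fin_cases i <;> fin_cases j <;>
        simp [Units.val_inv_eq_inv_val, inv_inv]
  -- key formula 1 : the (0,1)-entry of φ (ρ g v0) w1
  have hkey1 : ∀ g : Matrix.SpecialLinearGroup (Fin 2) k,
      (φ (ρ g v0) w1) 0 1 = (g.val 0 0) ^ (n + 2) * c := by
    intro g
    have h := heq' g v0 w1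
    rw [hψN g⁻¹] at h
    have hginv : ((g⁻¹ : Matrix.SpecialLinearGroup (Fin 2) k) : Matrix (Fin 2) (Fin 2) k)
        = !![g.val 1 1, -g.val 0 1; -g.val 1 0, g.val 0 0] := by
      rw [Matrix.SpecialLinearGroup.coe_inv]
      rw [show (g : Matrix (Fin 2) (Fin 2) k)
          = !![g.val 0 0, g.val 0 1; g.val 1 0, g.val 1 1] from Matrix.eta_fin_two _]
      rw [Matrix.adjugate_fin_two]
    have h11 : (g⁻¹ : Matrix.SpecialLinearGroup (Fin 2) k).val 1 1 = g.val 0 0 := by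
      have := congrFun (congrFun hginv 1) 1
      simpa using this
    rw [h11, hginv] at h
    rw [show (g : Matrix (Fin 2) (Fin 2) k)
        = !![g.val 0 0, g.val 0 1; g.val 1 0, g.val 1 1] from Matrix.eta_fin_two _] at h
    rw [h]
    simp [Matrix.mul_apply, Fin.sum_univ_two]
    try ring
  -- key formula 2 : the (1,0)-entry of φ (ρ (sl2low s) v0) (σ (sl2unip b) w1)
  have hkey2 : ∀ s b : k, (φ (ρ (sl2low s) v0) (σ (sl2unip b) w1)) 1 0
      = -(s ^ 2 * (1 - s * b) ^ n * c) := by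
    intro s b
    have hN := hψN (sl2low (-s) * sl2unip b)
    rw [σmul] at hN
    have h := heq' (sl2low s) v0 (σ (sl2unip b) w1)
    rw [sl2low_inv, hN] at h
    have hent : ((sl2low (-s) * sl2unip b)).val 1 1 = 1 - s * b := by
      have : ((sl2low (-s) * sl2unip b)).val = !![1, 0; -s, 1] * !![1, b; 0, 1] :=
        Matrix.SpecialLinearGroup.coe_mul _ _
      rw [this]
      simp [Matrix.mul_apply, Fin.sum_univ_two]
      ring
    rw [hent] at h
    rw [h]
    simp [Matrix.mul_apply, Fin.sum_univ_two, sl2low_coe]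
    try ring
  -- orbit spans
  have spanV : ∀ x : V, x ≠ 0 →
      Submodule.span k (Set.range fun g : Matrix.SpecialLinearGroup (Fin 2) k => ρ g x) = ⊤ := by
    intro x hx
    have hinv : ∀ g : Matrix.SpecialLinearGroup (Fin 2) k,
        ∀ y ∈ Submodule.span k (Set.range fun h => ρ h x),
          ρ g y ∈ Submodule.span k (Set.range fun h => ρ h x) := by
      intro g y hy
      have hmap : Submodule.map (ρ g) (Submodule.span k (Set.range fun h => ρ h x)) ≤
          Submodule.span k (Set.range fun h => ρ h x) := by
        rw [Submodule.map_span]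
        refine Submodule.span_le.mpr ?_
        rintro z ⟨z', ⟨h', rfl⟩, rfl⟩
        exact Submodule.subset_span ⟨g * h', by simpa using (ρmul g h' x).symm⟩
      exact hmap ⟨y, hy, rfl⟩
    rcases hVirr (Submodule.span k (Set.range fun g => ρ g x)) hinv with h | h
    · exfalso
      have hmem : x ∈ Submodule.span k (Set.range fun g => ρ g x) :=
        Submodule.subset_span ⟨1, by simp⟩
      rw [h] at hmem
      exact hx ((Submodule.mem_bot k).1 hmem)
    · exact h
  have spanW : ∀ x : W, x ≠ 0 →
      Submodule.span k (Set.range fun g : Matrix.SpecialLinearGroup (Fin 2) k => σ g x) = ⊤ := by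
    intro x hx
    have hinv : ∀ g : Matrix.SpecialLinearGroup (Fin 2) k,
        ∀ y ∈ Submodule.span k (Set.range fun h => σ h x),
          σ g y ∈ Submodule.span k (Set.range fun h => σ h x) := by
      intro g y hy
      have hmap : Submodule.map (σ g) (Submodule.span k (Set.range fun h => σ h x)) ≤
          Submodule.span k (Set.range fun h => σ h x) := by
        rw [Submodule.map_span]
        refine Submodule.span_le.mpr ?_
        rintro z ⟨z', ⟨h', rfl⟩, rfl⟩
        exact Submodule.subset_span ⟨g * h', by simpa using (σmul g h' x).symm⟩
      exact hmap ⟨y, hy, rfl⟩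
    rcases hWirr (Submodule.span k (Set.range fun g => σ g x)) hinv with h | h
    · exfalso
      have hmem : x ∈ Submodule.span k (Set.range fun g => σ g x) :=
        Submodule.subset_span ⟨1, by simp⟩
      rw [h] at hmem
      exact hx ((Submodule.mem_bot k).1 hmem)
    · exact h
  by_cases hc0 : c = 0
  · -- if c = 0 then φ vanishes identically
    have hψG : ∀ g : Matrix.SpecialLinearGroup (Fin 2) k, φ v0 (σ g w0) = 0 := by
      intro g
      by_cases hR : g.val 1 0 = 0
      · have hdec := sl2_decomp_C g hR
        rw [hdec, σmul, hw0d, _root_.map_smul, hw0u, _root_.map_smul, hψ0, smul_zero]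
      · have hdec := sl2_decomp_D g hR
        rw [hdec, σmul, hw0u, σmul, ← hw1def, σmul, hW1diag, _root_.map_smul, _root_.map_smul,
          hψu, hc0]
        ext i j
        fin_cases i <;> fin_cases j <;> simp
    have hv0ker : ∀ w : W, φ v0 w = 0 := by
      intro w
      have hw : w ∈ Submodule.span k (Set.range fun g => σ g w0) := by
        rw [spanW w0 hw0]; trivial
      have hle : Submodule.span k (Set.range fun g => σ g w0) ≤ LinearMap.ker (φ v0) := by
        refine Submodule.span_le.mpr ?_
        rintro z ⟨g, rfl⟩
        exact LinearMap.mem_ker.2 (hψG g)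
      exact LinearMap.mem_ker.1 (hle hw)
    have hkerinv : ∀ g : Matrix.SpecialLinearGroup (Fin 2) k,
        ∀ x ∈ LinearMap.ker φ, ρ g x ∈ LinearMap.ker φ := by
      intro g x hx
      rw [LinearMap.mem_ker] at hx ⊢
      apply LinearMap.ext
      intro w
      have h := heq' g x w
      rw [hx] at h
      simpa using h
    rcases hVirr (LinearMap.ker φ) hkerinv with hk | hk
    · exfalso
      have hmem : v0 ∈ LinearMap.ker φ :=
        LinearMap.mem_ker.2 (LinearMap.ext hv0ker)
      rw [hk] at hmem
      exact hv0 ((Submodule.mem_bot k).1 hmem)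
    · apply LinearMap.ext
      intro v
      have hv : v ∈ LinearMap.ker φ := hk ▸ Submodule.mem_top
      rw [LinearMap.mem_ker] at hv
      simp [hv]
  · -- c ≠ 0 : derive a contradiction
    exfalso
    obtain ⟨sk, e, hskinj, hcoeff⟩ := coeff_eval k (n + 2) (n + 1)
    set v' : V := ∑ j, e j • ρ (sl2low (sk j)) v0 with hv'def
    -- (a) the (0,1) entry of φ (ρ g v') w1 always vanishes
    have hA : ∀ g : Matrix.SpecialLinearGroup (Fin 2) k, (φ (ρ g v') w1) 0 1 = 0 := by
      intro g
      have hexp : ρ g v' = ∑ j, e j • ρ (g * sl2low (sk j)) v0 := by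
        rw [hv'def, _root_.map_sum]
        refine Finset.sum_congr rfl fun j _ => ?_
        rw [_root_.map_smul, ρmul]
      have hent : ∀ s : k, (g * sl2low s).val 0 0 = g.val 0 0 + g.val 0 1 * s := by
        intro s
        have : ((g * sl2low s)).val = (g : Matrix (Fin 2) (Fin 2) k) * !![1, 0; s, 1] :=
          Matrix.SpecialLinearGroup.coe_mul _ _
        rw [this]
        simp [Matrix.mul_apply, Fin.sum_univ_two]
      have hsum : (φ (ρ g v') w1) 0 1
          = ∑ j, e j * ((g.val 0 0 + g.val 0 1 * sk j) ^ (n + 2) * c) := by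
        rw [hexp, _root_.map_sum, LinearMap.sum_apply, Matrix.sum_apply]
        refine Finset.sum_congr rfl fun j _ => ?_
        rw [_root_.map_smul, LinearMap.smul_apply, Matrix.smul_apply, smul_eq_mul,
          hkey1 (g * sl2low (sk j)), hent (sk j)]
      rw [hsum]
      -- identify with a coefficient of a polynomial of degree ≤ n+2
      have heval : ∀ x : k, (Polynomial.C (g.val 0 0) +
          Polynomial.C (g.val 0 1) * Polynomial.X : Polynomial k).eval x
          = g.val 0 0 + g.val 0 1 * x := by
        intro x; simp
      set P : Polynomial k := (Polynomial.C (g.val 0 0) +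
        Polynomial.C (g.val 0 1) * Polynomial.X) ^ (n + 2) with hP
      have hdeg : P.natDegree ≤ n + 2 := by
        refine (Polynomial.natDegree_pow_le).trans ?_
        have h1 : (Polynomial.C (g.val 0 1) * Polynomial.X : Polynomial k).natDegree ≤ 1 :=
          (Polynomial.natDegree_C_mul_le _ _).trans (by simp)
        have h2 : (Polynomial.C (g.val 0 0) +
            Polynomial.C (g.val 0 1) * Polynomial.X : Polynomial k).natDegree ≤ 1 :=
          (Polynomial.natDegree_add_le _ _).trans (by simp [h1])
        calc (n + 2) * (Polynomial.C (g.val 0 0) +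
            Polynomial.C (g.val 0 1) * Polynomial.X : Polynomial k).natDegree
            ≤ (n + 2) * 1 := Nat.mul_le_mul_left _ h2
          _ = n + 2 := by ring
      have hcoeffP : P.coeff (n + 1) = 0 := by
        have hder : Polynomial.derivative P = 0 := by
          rw [hP, Polynomial.derivative_pow]
          simp [hmk]
        have h3 := Polynomial.coeff_derivative P n
        rw [hder] at h3
        simp only [Polynomial.coeff_zero] at h3
        have h4 := h3.symm
        rcases mul_eq_zero.mp h4 with h5 | h5
        · exact h5
        · exfalso
          rw [hn1k] at h5
          norm_num at h5
      have hs := hcoeff P hdeg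
      rw [hcoeffP] at hs
      have : ∑ j, e j * ((g.val 0 0 + g.val 0 1 * sk j) ^ (n + 2) * c)
          = (∑ j, e j * P.eval (sk j)) * c := by
        rw [Finset.sum_mul]
        refine Finset.sum_congr rfl fun j _ => ?_
        rw [hP]
        simp only [Polynomial.eval_pow, heval]
        ring
      rw [this, hs, zero_mul]
    -- (b) v' is nonzero
    have hB10 : (φ v' (σ (sl2unip (-1)) w1)) 1 0 = -((n : k) * c) := by
      have hsum : (φ v' (σ (sl2unip (-1)) w1)) 1 0
          = ∑ j, e j * (-(sk j ^ 2 * (1 + sk j) ^ n * c)) := by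
        rw [hv'def, _root_.map_sum, LinearMap.sum_apply, Matrix.sum_apply]
        refine Finset.sum_congr rfl fun j _ => ?_
        rw [_root_.map_smul, LinearMap.smul_apply, Matrix.smul_apply, smul_eq_mul,
          hkey2 (sk j) (-1)]
        ring_nf
      rw [hsum]
      set Q : Polynomial k := Polynomial.X ^ 2 * (Polynomial.X + Polynomial.C 1) ^ n with hQ
      have hdegQ : Q.natDegree ≤ n + 2 := by
        rw [hQ]
        refine (Polynomial.natDegree_mul_le).trans ?_
        have h1 : ((Polynomial.X + Polynomial.C 1 : Polynomial k) ^ n).natDegree ≤ n := by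
          refine (Polynomial.natDegree_pow_le).trans ?_
          rw [Polynomial.natDegree_X_add_C]
          omega
        simp only [Polynomial.natDegree_X_pow]
        omega
      have hcoeffQ : Q.coeff (n + 1) = (n : k) := by
        rw [hQ]
        have hidx : n + 1 = (n - 1) + 2 := by omega
        rw [hidx, Polynomial.coeff_X_pow_mul]
        rw [Polynomial.C_1, Polynomial.coeff_X_add_one_pow]
        have hch : n.choose (n - 1) = n := by
          rw [Nat.choose_symm hn1, Nat.choose_one_right]
        rw [hch]
      have hevalQ : ∀ x : k, Q.eval x = x ^ 2 * (1 + x) ^ n := by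
        intro x
        rw [hQ]
        simp only [Polynomial.eval_mul, Polynomial.eval_pow, Polynomial.eval_add,
          Polynomial.eval_X, Polynomial.eval_C]
        ring
      have hs := hcoeff Q hdegQ
      rw [hcoeffQ] at hs
      have : ∑ j, e j * (-(sk j ^ 2 * (1 + sk j) ^ n * c))
          = -((∑ j, e j * Q.eval (sk j)) * c) := by
        rw [Finset.sum_mul, ← Finset.sum_neg_distrib]
        refine Finset.sum_congr rfl fun j _ => ?_
        rw [hevalQ]
        ring
      rw [this, hs]
    have hv'ne : v' ≠ 0 := by
      intro h0
      rw [h0] at hB10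
      simp only [_root_.map_zero, LinearMap.zero_apply, Matrix.zero_apply] at hB10
      exact (mul_ne_zero hnk hc0) (by linear_combination hB10)
    -- (c) contradiction
    have hv0mem : v0 ∈ Submodule.span k (Set.range fun g => ρ g v') := by
      rw [spanV v' hv'ne]; trivial
    rw [Submodule.mem_span_set'] at hv0mem
    obtain ⟨nn, f, gs, hsum⟩ := hv0mem
    have hzero : ∀ i : Fin nn, (φ ((gs i : V)) w1) 0 1 = 0 := by
      intro i
      obtain ⟨g, hg⟩ := (gs i).2
      rw [← hg]
      exact hA g
    have hfinal : (φ v0 w1) 0 1 = 0 := by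
      rw [← hsum, _root_.map_sum, LinearMap.sum_apply, Matrix.sum_apply]
      refine Finset.sum_eq_zero fun i _ => ?_
      rw [_root_.map_smul, LinearMap.smul_apply, Matrix.smul_apply, smul_eq_mul, hzero i,
        mul_zero]
    exact hc0 (hcdef ▸ hfinal)
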